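/- Let n ≥ 1 and let f : ℝ^{2n} → ℝ be defined on the closed unit ball by f(z) = π/8 + (|z|/4)·√(1 − |z|²) − (1/4)·arcsin(|z|). Then f is twice continuously differentiable on the open unit ball B(0,1), but f is not three times continuously differentiable on any neighborhood of the origin (the third-order radial derivative has a jump discontinuity at 0). -/

import Mathlib

set_option maxHeartbeats 1000000
set_option synthInstance.maxHeartbeats 400000
open Metric Real

noncomputable def myg (r : ℝ) : ℝ := r / 4 * Real.sqrt (1 - r ^ 2) - Real.arcsin r / 4
noncomputable def myg1 (r : ℝ) : ℝ := -r ^ 2 / (2 * Real.sqrt (1 - r ^ 2))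
noncomputable def myg2 (r : ℝ) : ℝ := (r ^ 3 - 2 * r) / (2 * Real.sqrt (1 - r ^ 2) ^ 3)
noncomputable def myg3 (r : ℝ) : ℝ := (-r ^ 2 - 2) / (2 * Real.sqrt (1 - r ^ 2) ^ 5)

lemma sq_pos_aux {r : ℝ} (h1 : -1 < r) (h2 : r < 1) : 0 < 1 - r ^ 2 := by nlinarith

lemma sqrt_aux {r : ℝ} (h1 : -1 < r) (h2 : r < 1) :
    0 < Real.sqrt (1 - r ^ 2) := Real.sqrt_pos.2 (sq_pos_aux h1 h2)

lemma hasDerivAt_sqrt_aux {r : ℝ} (h1 : -1 < r) (h2 : r < 1) :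
    HasDerivAt (fun t : ℝ => Real.sqrt (1 - t ^ 2)) (-2 * r / (2 * Real.sqrt (1 - r ^ 2))) r := by
  have h : HasDerivAt (fun t : ℝ => 1 - t ^ 2) (-2 * r) r := by
    simpa using ((hasDerivAt_pow 2 r).const_sub 1)
  exact h.sqrt (ne_of_gt (sq_pos_aux h1 h2))

lemma hasDerivAt_myg {r : ℝ} (h1 : -1 < r) (h2 : r < 1) : HasDerivAt myg (myg1 r) r := by
  have hs := sqrt_aux h1 h2
  have hsq : Real.sqrt (1 - r ^ 2) ^ 2 = 1 - r ^ 2 := Real.sq_sqrt (le_of_lt (sq_pos_aux h1 h2))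
  have ha : HasDerivAt (fun t : ℝ => t / 4 * Real.sqrt (1 - t ^ 2))
      ((1 / 4) * Real.sqrt (1 - r ^ 2) + r / 4 * (-2 * r / (2 * Real.sqrt (1 - r ^ 2)))) r := by
    exact ((hasDerivAt_id r).div_const 4).mul (hasDerivAt_sqrt_aux h1 h2)
  have hb : HasDerivAt (fun t : ℝ => Real.arcsin t / 4)
      (1 / Real.sqrt (1 - r ^ 2) / 4) r :=
    (Real.hasDerivAt_arcsin (by linarith) (by linarith)).div_const 4
  have := ha.sub hb
  refine this.congr_deriv ?_
  symm
  unfold myg1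
  field_simp
  linear_combination (-2:ℝ) * hsq

lemma hasDerivAt_myg1 {r : ℝ} (h1 : -1 < r) (h2 : r < 1) : HasDerivAt myg1 (myg2 r) r := by
  have hs := sqrt_aux h1 h2
  have hsq : Real.sqrt (1 - r ^ 2) ^ 2 = 1 - r ^ 2 := Real.sq_sqrt (le_of_lt (sq_pos_aux h1 h2))
  have hnum : HasDerivAt (fun t : ℝ => -t ^ 2) (-(2 * r)) r := by
    exact (hasDerivAt_pow 2 r).neg.congr_deriv (by norm_num)
  have hden : HasDerivAt (fun t : ℝ => 2 * Real.sqrt (1 - t ^ 2))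
      (2 * (-2 * r / (2 * Real.sqrt (1 - r ^ 2)))) r := (hasDerivAt_sqrt_aux h1 h2).const_mul 2
  have := hnum.div hden (by positivity)
  refine this.congr_deriv ?_
  symm
  unfold myg2
  field_simp
  linear_combination ((2:ℝ) * r) * hsq

lemma hasDerivAt_myg2 {r : ℝ} (h1 : -1 < r) (h2 : r < 1) : HasDerivAt myg2 (myg3 r) r := by
  have hs := sqrt_aux h1 h2
  have hsq : Real.sqrt (1 - r ^ 2) ^ 2 = 1 - r ^ 2 := Real.sq_sqrt (le_of_lt (sq_pos_aux h1 h2))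
  have hnum : HasDerivAt (fun t : ℝ => t ^ 3 - 2 * t) (3 * r ^ 2 - 2) r := by
    exact ((hasDerivAt_pow 3 r).sub ((hasDerivAt_id r).const_mul 2)).congr_deriv (by norm_num)
  have hden : HasDerivAt (fun t : ℝ => 2 * Real.sqrt (1 - t ^ 2) ^ 3)
      (2 * (3 * Real.sqrt (1 - r ^ 2) ^ 2 * (-2 * r / (2 * Real.sqrt (1 - r ^ 2))))) r := by
    exact (((hasDerivAt_sqrt_aux h1 h2).pow 3).const_mul 2).congr_deriv (by ring)
  have := hnum.div hden (by positivity)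
  refine this.congr_deriv ?_
  symm
  unfold myg3
  field_simp
  linear_combination ((2:ℝ) - 3 * r ^ 2) * hsq

noncomputable def myG (s : ℝ) : ℝ := myg (Real.sqrt s)
noncomputable def myw (s : ℝ) : ℝ := -Real.sqrt s / (4 * Real.sqrt (1 - s))

lemma myg_zero : myg 0 = 0 := by simp [myg]

lemma myG_nonpos {s : ℝ} (h : s ≤ 0) : myG s = 0 := by
  rw [myG, Real.sqrt_eq_zero'.mpr h, myg_zero]

lemma myg_bound {r : ℝ} (h0 : 0 ≤ r) (h1 : r ≤ 1 / 2) : |myg r| ≤ r ^ 3 := by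
  have key : ∀ t ∈ Set.Icc (0:ℝ) r, HasDerivWithinAt myg (myg1 t) (Set.Icc 0 r) t := by
    intro t ht
    exact (hasDerivAt_myg (by linarith [ht.1]) (by linarith [ht.2])).hasDerivWithinAt
  have bnd : ∀ t ∈ Set.Icc (0:ℝ) r, ‖myg1 t‖ ≤ r ^ 2 := by
    intro t ht
    have ht0 := ht.1; have htr := ht.2
    have h14 : (1:ℝ)/2 ≤ Real.sqrt (1 - t ^ 2) := by
      rw [show (1:ℝ)/2 = Real.sqrt (1/4) by
        rw [show (1:ℝ)/4 = (1/2)^2 by norm_num, Real.sqrt_sq]; norm_num]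
      apply Real.sqrt_le_sqrt; nlinarith
    have hsp : 0 < Real.sqrt (1 - t ^ 2) := by linarith
    rw [myg1, Real.norm_eq_abs, abs_div, abs_of_nonpos (neg_nonpos.2 (sq_nonneg t)),
      abs_of_pos (by linarith : (0:ℝ) < 2 * Real.sqrt (1 - t ^ 2))]
    calc - -t ^ 2 / (2 * Real.sqrt (1 - t ^ 2)) = t ^ 2 / (2 * Real.sqrt (1 - t ^ 2)) := by
          ring_nf
    _ ≤ t ^ 2 := div_le_self (sq_nonneg t) (by linarith)
    _ ≤ r ^ 2 := by nlinarith
  have := Convex.norm_image_sub_le_of_norm_hasDerivWithin_le key bnd (convex_Icc 0 r)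
    (Set.left_mem_Icc.2 h0) (Set.right_mem_Icc.2 h0)
  rw [myg_zero] at this
  calc |myg r| = ‖myg r - 0‖ := by rw [sub_zero, Real.norm_eq_abs]
  _ ≤ r ^ 2 * ‖r - 0‖ := this
  _ = r ^ 3 := by rw [sub_zero, Real.norm_eq_abs, abs_of_nonneg h0]; ring

lemma hasDerivAt_myG {s : ℝ} (h : s < 1) : HasDerivAt myG (myw s) s := by
  rcases lt_trichotomy s 0 with hneg | rfl | hpos
  · have hw : myw s = 0 := by
      rw [myw, Real.sqrt_eq_zero'.mpr hneg.le]; simp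
    rw [hw]
    apply (hasDerivAt_const s (0:ℝ)).congr_of_eventuallyEq
    filter_upwards [Iio_mem_nhds hneg] with t ht
    exact myG_nonpos (le_of_lt ht)
  · -- s = 0
    have hw : myw 0 = 0 := by simp [myw]
    rw [hw, hasDerivAt_iff_isLittleO]
    simp only [sub_zero, smul_zero, myG_nonpos le_rfl]
    rw [Asymptotics.isLittleO_iff]
    intro c hc
    filter_upwards [Metric.ball_mem_nhds (0:ℝ) (by positivity : (0:ℝ) < min (c^2) (1/4))]
      with t ht
    rw [mem_ball, Real.dist_eq, sub_zero] at ht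
    rcases le_or_gt t 0 with ht0 | ht0
    · simp only [myG_nonpos ht0, norm_zero, Real.norm_eq_abs]
      positivity
    · have htc : t < min (c^2) (1/4) := (le_abs_self t).trans_lt ht
      have h1 : Real.sqrt t ≤ 1/2 := by
        rw [show (1:ℝ)/2 = Real.sqrt (1/4) by
          rw [show (1:ℝ)/4 = (1/2)^2 by norm_num, Real.sqrt_sq]; norm_num]
        exact Real.sqrt_le_sqrt (by simp at htc; linarith [htc.2])
      have h2 : Real.sqrt t ≤ c := by
        have : t ≤ c^2 := by simp at htc; linarith [htc.1]
        calc Real.sqrt t ≤ Real.sqrt (c^2) := Real.sqrt_le_sqrt this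
        _ = c := Real.sqrt_sq hc.le
      have := myg_bound (Real.sqrt_nonneg t) h1
      rw [Real.norm_eq_abs, Real.norm_eq_abs, myG]
      calc |myg (Real.sqrt t)| ≤ Real.sqrt t ^ 3 := this
      _ = t * Real.sqrt t := by
          rw [pow_succ, Real.sq_sqrt ht0.le]
      _ ≤ c * |t| := by
          rw [abs_of_pos ht0]; nlinarith [Real.sqrt_nonneg t]
  · -- 0 < s < 1
    have hr1 : Real.sqrt s < 1 := by
      rw [show (1:ℝ) = Real.sqrt 1 by simp]; exact Real.sqrt_lt_sqrt hpos.le h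
    have hrpos : 0 < Real.sqrt s := Real.sqrt_pos.2 hpos
    have hchain := (hasDerivAt_myg (by linarith) hr1).comp s (Real.hasDerivAt_sqrt hpos.ne')
    refine hchain.congr_deriv ?_
    symm
    rw [myw, myg1, Real.sq_sqrt hpos.le]
    have h1s : 0 < Real.sqrt (1 - s) := Real.sqrt_pos.2 (by linarith)
    have hms : Real.sqrt s * Real.sqrt s = s := Real.mul_self_sqrt hpos.le
    field_simp
    linear_combination (-4:ℝ) * hms

section Vec
variable {E : Type*} [NormedAddCommGroup E] [InnerProductSpace ℝ E]

noncomputable def myInner : E →L[ℝ] (E →L[ℝ] ℝ) := innerSL ℝ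

lemma norm_myInner (z : E) : ‖myInner z‖ = ‖z‖ := by
  show ‖innerSL ℝ z‖ = ‖z‖
  exact innerSL_apply_norm ℝ z

noncomputable def myA (z : E) : E →L[ℝ] ℝ := ‖z‖ • myInner z

noncomputable def myB (z : E) : E →L[ℝ] (E →L[ℝ] ℝ) :=
  ‖z‖ • myInner + (‖z‖⁻¹ • myInner z).smulRight (myInner z)

lemma hasFDerivAt_norm_aux {z : E} (hz : z ≠ 0) :
    HasFDerivAt (fun y : E => ‖y‖) (‖z‖⁻¹ • myInner z) z := by
  have h1 : HasFDerivAt (fun y : E => ‖y‖ ^ 2) (2 • (innerSL ℝ z)) z :=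
    (hasStrictFDerivAt_norm_sq z).hasFDerivAt
  have h2 : HasDerivAt Real.sqrt (1 / (2 * Real.sqrt (‖z‖ ^ 2))) (‖z‖ ^ 2) :=
    Real.hasDerivAt_sqrt (pow_ne_zero 2 (norm_ne_zero_iff.2 hz))
  have h3 := h2.comp_hasFDerivAt z h1
  have h4 : (fun y : E => Real.sqrt (‖y‖ ^ 2)) = fun y : E => ‖y‖ := by
    funext y; rw [Real.sqrt_sq (norm_nonneg y)]
  rw [Function.comp_def, h4] at h3
  have h5 : (‖z‖⁻¹ • myInner z : E →L[ℝ] ℝ)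
      = (1 / (2 * Real.sqrt (‖z‖ ^ 2))) • (2 • (innerSL ℝ z) : E →L[ℝ] ℝ) := by
    rw [Real.sqrt_sq (norm_nonneg z)]
    ext y
    have : ‖z‖ ≠ 0 := norm_ne_zero_iff.2 hz
    show ‖z‖⁻¹ • (innerSL ℝ z) y = (1 / (2 * ‖z‖)) • (2 • (innerSL ℝ z) : E →L[ℝ] ℝ) y
    simp only [ContinuousLinearMap.smul_apply, smul_smul, two_smul,
      ContinuousLinearMap.add_apply, smul_eq_mul]
    field_simp
    ring
  rw [h5]
  exact h3

lemma myB_zero : (myB (0 : E)) = 0 := by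
  ext y x
  simp [myB]

lemma hasFDerivAt_myA (z : E) : HasFDerivAt (myA : E → E →L[ℝ] ℝ) (myB z) z := by
  rcases eq_or_ne z 0 with rfl | hz
  · rw [myB_zero, hasFDerivAt_iff_isLittleO_nhds_zero]
    rw [Asymptotics.isLittleO_iff]
    intro c hc
    filter_upwards [Metric.ball_mem_nhds (0:E) hc] with h hh
    rw [mem_ball, dist_zero_right] at hh
    have e0 : myA (0 : E) = 0 := by rw [myA, norm_zero, zero_smul]
    rw [zero_add, e0, sub_zero, ContinuousLinearMap.zero_apply, sub_zero, myA]
    calc ‖‖h‖ • myInner h‖ ≤ ‖(‖h‖)‖ * ‖myInner h‖ := norm_smul_le (‖h‖) (myInner h)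
    _ = ‖h‖ * ‖h‖ := by rw [norm_norm, norm_myInner]
    _ ≤ c * ‖h‖ := by nlinarith [norm_nonneg h]
  · have hn := hasFDerivAt_norm_aux hz
    have hi : HasFDerivAt (fun y : E => myInner y) (myInner : E →L[ℝ] (E →L[ℝ] ℝ)) z :=
      (myInner : E →L[ℝ] (E →L[ℝ] ℝ)).hasFDerivAt
    exact hn.smul hi

lemma norm_myT_le (y : E) : ‖(‖y‖⁻¹ • myInner y).smulRight (myInner y)‖ ≤ ‖y‖ := by
  rw [ContinuousLinearMap.norm_smulRight_apply, norm_smul (‖y‖⁻¹) (myInner y),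
    norm_myInner, norm_inv, norm_norm]
  rcases eq_or_ne y 0 with rfl | hy
  · simp only [norm_zero]; norm_num
  · have : ‖y‖ ≠ 0 := norm_ne_zero_iff.2 hy
    rw [inv_mul_cancel₀ this, one_mul]

lemma continuous_myB : Continuous (myB : E → E →L[ℝ] (E →L[ℝ] ℝ)) := by
  have hsr : Continuous (fun p : (E →L[ℝ] ℝ) × (E →L[ℝ] ℝ) => p.1.smulRight p.2) :=
    isBoundedBilinearMap_smulRight.continuous
  rw [show (myB : E → E →L[ℝ] (E →L[ℝ] ℝ)) = fun z =>
      ‖z‖ • (myInner : E →L[ℝ] (E →L[ℝ] ℝ)) + (‖z‖⁻¹ • myInner z).smulRight (myInner z)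
    from rfl]
  haveI : ContinuousAdd (E →L[ℝ] E →L[ℝ] ℝ) :=
    (inferInstance : IsTopologicalAddGroup (E →L[ℝ] E →L[ℝ] ℝ)).toContinuousAdd
  apply Continuous.fun_add
  · exact continuous_norm.smul continuous_const
  · rw [continuous_iff_continuousAt]
    intro z
    rcases eq_or_ne z 0 with rfl | hz
    · have hT0 : ((‖(0:E)‖⁻¹ • myInner (0:E)).smulRight (myInner (0:E))) = 0 := by
        rw [map_zero, smul_zero]
        ext y x; simp
      have key : Filter.Tendsto (fun y : E => (‖y‖⁻¹ • myInner y).smulRight (myInner y))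
          (nhds 0) (nhds 0) :=
        squeeze_zero_norm (E := E →L[ℝ] E →L[ℝ] ℝ) norm_myT_le tendsto_norm_zero
      unfold ContinuousAt
      have h00 : (ContinuousLinearMap.smulRight (0 : E →L[ℝ] ℝ) (0 : E →L[ℝ] ℝ)) = 0 := by
        ext y x; simp
      simpa [h00] using key
    · have h1 : ContinuousAt (fun y : E => ‖y‖⁻¹ • myInner y) z :=
        (continuous_norm.continuousAt.inv₀ (norm_ne_zero_iff.2 hz)).smul
          (myInner : E →L[ℝ] (E →L[ℝ] ℝ)).continuous.continuousAt
      have h2 : ContinuousAt (fun y : E => myInner y) z :=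
        (myInner : E →L[ℝ] (E →L[ℝ] ℝ)).continuous.continuousAt
      exact (hsr.continuousAt).comp (h1.prodMk h2)

lemma contDiff_myA : ContDiff ℝ 1 (myA : E → E →L[ℝ] ℝ) := by
  rw [contDiff_one_iff_fderiv]
  refine ⟨fun z => (hasFDerivAt_myA z).differentiableAt, ?_⟩
  have : (fderiv ℝ (myA : E → E →L[ℝ] ℝ)) = myB := by
    funext z; exact (hasFDerivAt_myA z).fderiv
  rw [this]
  exact continuous_myB

end Vec

section Part1
variable {E : Type*} [NormedAddCommGroup E] [InnerProductSpace ℝ E]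

noncomputable def myc (z : E) : ℝ := -(1 / (2 * Real.sqrt (1 - ‖z‖ ^ 2)))

lemma hasFDerivAt_main {f : E → ℝ}
    (hf : ∀ z : E, ‖z‖ ≤ 1 → f z = π / 8 + ‖z‖ / 4 * Real.sqrt (1 - ‖z‖ ^ 2)
      - Real.arcsin ‖z‖ / 4)
    {z : E} (hz : z ∈ ball (0 : E) 1) :
    HasFDerivAt f (myc z • myA z) z := by
  have hz1 : ‖z‖ < 1 := mem_ball_zero_iff.1 hz
  have hq : HasFDerivAt (fun y : E => ‖y‖ ^ 2) (2 • innerSL ℝ z) z :=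
    (hasStrictFDerivAt_norm_sq z).hasFDerivAt
  have hG : HasDerivAt myG (myw (‖z‖ ^ 2)) (‖z‖ ^ 2) :=
    hasDerivAt_myG (by nlinarith [norm_nonneg z])
  have hcomp := hG.comp_hasFDerivAt z hq
  have hF : HasFDerivAt (fun y : E => π / 8 + myG (‖y‖ ^ 2))
      (myw (‖z‖ ^ 2) • (2 • innerSL ℝ z)) z := hcomp.const_add (π / 8)
  have hFeq : (fun y : E => π / 8 + myG (‖y‖ ^ 2)) =ᶠ[nhds z] f := by
    filter_upwards [isOpen_ball.mem_nhds hz] with y hy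
    have hy1 : ‖y‖ ≤ 1 := le_of_lt (mem_ball_zero_iff.1 hy)
    rw [hf y hy1, myG, Real.sqrt_sq (norm_nonneg y), myg]
    ring
  have hmain := hF.congr_of_eventuallyEq hFeq.symm
  have hVeq : (myw (‖z‖ ^ 2) • (2 • innerSL ℝ z) : E →L[ℝ] ℝ) = myc z • myA z := by
    have hs : Real.sqrt (‖z‖ ^ 2) = ‖z‖ := Real.sqrt_sq (norm_nonneg z)
    have hpos : (0:ℝ) < 1 - ‖z‖ ^ 2 := by nlinarith [norm_nonneg z]
    have hsp : 0 < Real.sqrt (1 - ‖z‖ ^ 2) := Real.sqrt_pos.2 hpos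
    ext y
    simp only [ContinuousLinearMap.smul_apply, myw, myc, myA, myInner, hs, smul_eq_mul,
      ContinuousLinearMap.coe_smul', Pi.smul_apply, two_smul,
      ContinuousLinearMap.add_apply, innerSL_apply_apply]
    field_simp
    rw [show ((innerSL ℝ) z) y = (inner ℝ z y : ℝ) from rfl]
    ring
  rw [← hVeq]
  exact hmain

lemma part1 {f : E → ℝ}
    (hf : ∀ z : E, ‖z‖ ≤ 1 → f z = π / 8 + ‖z‖ / 4 * Real.sqrt (1 - ‖z‖ ^ 2)
      - Real.arcsin ‖z‖ / 4) :
    ContDiffOn ℝ 2 f (ball (0 : E) 1) := by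
  have h21 : (2 : WithTop ℕ∞) = 1 + 1 := by norm_num
  rw [h21, contDiffOn_succ_iff_fderiv_of_isOpen isOpen_ball]
  refine ⟨fun z hz => (hasFDerivAt_main hf hz).differentiableAt.differentiableWithinAt,
    ?_, ?_⟩
  · intro h
    simp at h
  · have hc_cd : ContDiffOn ℝ 1 (fun z : E => myc z) (ball 0 1) := by
      intro z hz
      have hz1 : ‖z‖ < 1 := mem_ball_zero_iff.1 hz
      have hpos : (0:ℝ) < 1 - ‖z‖ ^ 2 := by nlinarith [norm_nonneg z]
      have hsp : 0 < Real.sqrt (1 - ‖z‖ ^ 2) := Real.sqrt_pos.2 hpos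
      have h1 : ContDiffAt ℝ 1 (fun y : E => 1 - ‖y‖ ^ 2) z :=
        contDiffAt_const.sub (contDiff_norm_sq ℝ).contDiffAt
      have h2 : ContDiffAt ℝ 1 (fun y : E => Real.sqrt (1 - ‖y‖ ^ 2)) z :=
        h1.sqrt (ne_of_gt hpos)
      have h3 : ContDiffAt ℝ 1 (fun y : E => -(1 / (2 * Real.sqrt (1 - ‖y‖ ^ 2)))) z := by
        have := (contDiffAt_const (c := (1:ℝ))).div (contDiffAt_const.mul h2)
          (ne_of_gt (by linarith : (0:ℝ) < 2 * Real.sqrt (1 - ‖z‖ ^ 2)))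
        exact this.neg
      exact h3.contDiffWithinAt
    have hV_cd : ContDiffOn ℝ 1 (fun z : E => myc z • myA z) (ball 0 1) :=
      hc_cd.smul contDiff_myA.contDiffOn
    exact hV_cd.congr fun z hz => (hasFDerivAt_main hf hz).fderiv

end Part1

lemma myg3_tendsto_right : Filter.Tendsto myg3 (nhdsWithin 0 (Set.Ioi 0)) (nhds (-1)) := by
  have hc : ContinuousAt myg3 0 := by
    apply ContinuousAt.div
    · fun_prop
    · apply ContinuousAt.mul continuousAt_const
      apply ContinuousAt.pow
      apply Real.continuous_sqrt.continuousAt.comp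
      fun_prop
    · simp [Real.sqrt_one]
  have hval : myg3 0 = -1 := by simp [myg3, Real.sqrt_one]
  rw [← hval]
  exact hc.tendsto.mono_left nhdsWithin_le_nhds

lemma myg3_tendsto_left :
    Filter.Tendsto (fun t : ℝ => -myg3 (-t)) (nhdsWithin 0 (Set.Iio 0)) (nhds 1) := by
  have hc : ContinuousAt myg3 0 := by
    apply ContinuousAt.div
    · fun_prop
    · apply ContinuousAt.mul continuousAt_const
      apply ContinuousAt.pow
      apply Real.continuous_sqrt.continuousAt.comp
      fun_prop
    · simp [Real.sqrt_one]
  have hval : myg3 0 = -1 := by simp [myg3, Real.sqrt_one]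
  have h2 : ContinuousAt (fun t : ℝ => -myg3 (-t)) 0 := by
    apply ContinuousAt.neg
    have h0 : ContinuousAt (fun t : ℝ => -t) (0:ℝ) := by fun_prop
    have := ContinuousAt.comp (x := (0:ℝ)) (g := myg3) (by simpa using hc) h0
    exact this
  have h3 : (fun t : ℝ => -myg3 (-t)) 0 = 1 := by simp [hval]
  rw [← h3]
  exact h2.tendsto.mono_left nhdsWithin_le_nhds

theorem stmt_13 (n : ℕ) (hn : 1 ≤ n) (f : EuclideanSpace ℝ (Fin (2 * n)) → ℝ)
    (hf : ∀ z : EuclideanSpace ℝ (Fin (2 * n)), ‖z‖ ≤ 1 →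
      f z = π / 8 + ‖z‖ / 4 * Real.sqrt (1 - ‖z‖ ^ 2) - Real.arcsin ‖z‖ / 4) :
    ContDiffOn ℝ 2 f (ball 0 1) ∧
    ¬ ∃ U ∈ nhds (0 : EuclideanSpace ℝ (Fin (2 * n))), ContDiffOn ℝ 3 f U := by
  refine ⟨part1 hf, ?_⟩
  rintro ⟨U, hU, hC3⟩
  have hne : 0 < 2 * n := by omega
  set e : EuclideanSpace ℝ (Fin (2 * n)) := EuclideanSpace.single ⟨0, hne⟩ (1 : ℝ) with he_def
  have he : ‖e‖ = 1 := by rw [he_def, EuclideanSpace.norm_single]; norm_num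
  set L : ℝ → EuclideanSpace ℝ (Fin (2 * n)) := fun t => t • e with hL_def
  have hL : ContDiff ℝ 3 L := contDiff_id.smul contDiff_const
  have hL0 : L 0 = 0 := zero_smul ℝ e
  have hfa : ContDiffAt ℝ 3 f (L 0) := by
    rw [hL0]; exact hC3.contDiffAt hU
  have hφa : ContDiffAt ℝ 3 (f ∘ L) 0 := hfa.comp 0 hL.contDiffAt
  obtain ⟨u, hu_nhds, huC⟩ := hφa.contDiffOn le_rfl (by intro h; simp at h)
  obtain ⟨ε, εpos, hball⟩ := Metric.mem_nhds_iff.1 hu_nhds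
  set δ : ℝ := min ε (1/2) with hδ_def
  have δpos : 0 < δ := lt_min εpos (by norm_num)
  have hδhalf : δ ≤ 1/2 := min_le_right _ _
  have hδε : δ ≤ ε := min_le_left _ _
  have hsub : Set.Ioo (-δ) δ ⊆ u := by
    intro t ht
    apply hball
    rw [mem_ball, Real.dist_eq, sub_zero, abs_lt]
    exact ⟨by linarith [ht.1], by linarith [ht.2]⟩
  set φ : ℝ → ℝ := f ∘ L with hφ_def
  have hφ3 : ContDiffOn ℝ 3 φ (Set.Ioo (-δ) δ) := huC.mono hsub
  have h32 : (3 : WithTop ℕ∞) = 2 + 1 := by norm_num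
  have h21 : (2 : WithTop ℕ∞) = 1 + 1 := by norm_num
  have h10 : (1 : WithTop ℕ∞) = 0 + 1 := by norm_num
  rw [h32, contDiffOn_succ_iff_deriv_of_isOpen isOpen_Ioo] at hφ3
  replace hφ3 := hφ3.2.2
  rw [h21, contDiffOn_succ_iff_deriv_of_isOpen isOpen_Ioo] at hφ3
  replace hφ3 := hφ3.2.2
  rw [h10, contDiffOn_succ_iff_deriv_of_isOpen isOpen_Ioo] at hφ3
  replace hφ3 := hφ3.2.2
  have hcont : ContinuousOn (deriv (deriv (deriv φ))) (Set.Ioo (-δ) δ) := hφ3.continuousOn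
  have hCA : ContinuousAt (deriv (deriv (deriv φ))) 0 :=
    hcont.continuousAt (Ioo_mem_nhds (by linarith) δpos)
  -- right side
  have hnormL : ∀ t : ℝ, ‖L t‖ = |t| := by
    intro t; rw [hL_def]; simp only; rw [norm_smul, he, mul_one, Real.norm_eq_abs]
  have hright : ∀ t ∈ Set.Ioo (0:ℝ) δ, φ t = π / 8 + myg t := by
    intro t ht
    have h1 : ‖L t‖ ≤ 1 := by rw [hnormL, abs_of_pos ht.1]; linarith [ht.2]
    have : φ t = f (L t) := rfl
    rw [this, hf (L t) h1, hnormL, abs_of_pos ht.1, myg]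
    ring
  have hbnd : ∀ t ∈ Set.Ioo (0:ℝ) δ, -1 < t ∧ t < 1 := by
    intro t ht; exact ⟨by linarith [ht.1], by linarith [ht.2]⟩
  have hD1 : ∀ t ∈ Set.Ioo (0:ℝ) δ, deriv φ t = myg1 t := by
    intro t ht
    obtain ⟨hb1, hb2⟩ := hbnd t ht
    have hev : φ =ᶠ[nhds t] fun y => π / 8 + myg y :=
      Filter.eventuallyEq_of_mem (isOpen_Ioo.mem_nhds ht) hright
    exact (((hasDerivAt_myg hb1 hb2).const_add (π / 8)).congr_of_eventuallyEq hev).deriv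
  have hD2 : ∀ t ∈ Set.Ioo (0:ℝ) δ, deriv (deriv φ) t = myg2 t := by
    intro t ht
    obtain ⟨hb1, hb2⟩ := hbnd t ht
    have hev : deriv φ =ᶠ[nhds t] myg1 :=
      Filter.eventuallyEq_of_mem (isOpen_Ioo.mem_nhds ht) hD1
    exact ((hasDerivAt_myg1 hb1 hb2).congr_of_eventuallyEq hev).deriv
  have hD3 : ∀ t ∈ Set.Ioo (0:ℝ) δ, deriv (deriv (deriv φ)) t = myg3 t := by
    intro t ht
    obtain ⟨hb1, hb2⟩ := hbnd t ht
    have hev : deriv (deriv φ) =ᶠ[nhds t] myg2 :=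
      Filter.eventuallyEq_of_mem (isOpen_Ioo.mem_nhds ht) hD2
    exact ((hasDerivAt_myg2 hb1 hb2).congr_of_eventuallyEq hev).deriv
  have hval1 : deriv (deriv (deriv φ)) 0 = -1 := by
    have hgt : Filter.Tendsto (deriv (deriv (deriv φ))) (nhdsWithin 0 (Set.Ioi 0))
        (nhds (deriv (deriv (deriv φ)) 0)) := hCA.tendsto.mono_left nhdsWithin_le_nhds
    have hev3 : deriv (deriv (deriv φ)) =ᶠ[nhdsWithin 0 (Set.Ioi 0)] myg3 :=
      Filter.eventuallyEq_of_mem (Ioo_mem_nhdsGT_of_mem ⟨le_rfl, δpos⟩) hD3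
    exact tendsto_nhds_unique (hgt.congr' hev3) myg3_tendsto_right
  -- left side
  have hleft : ∀ t ∈ Set.Ioo (-δ) (0:ℝ), φ t = π / 8 + myg (-t) := by
    intro t ht
    have h1 : ‖L t‖ ≤ 1 := by rw [hnormL, abs_of_neg ht.2]; linarith [ht.1]
    have : φ t = f (L t) := rfl
    rw [this, hf (L t) h1, hnormL, abs_of_neg ht.2, myg]
    ring_nf
  have hbnd' : ∀ t ∈ Set.Ioo (-δ) (0:ℝ), -1 < -t ∧ -t < 1 := by
    intro t ht; exact ⟨by linarith [ht.2], by linarith [ht.1]⟩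
  have hE1 : ∀ t ∈ Set.Ioo (-δ) (0:ℝ), deriv φ t = -myg1 (-t) := by
    intro t ht
    obtain ⟨hb1, hb2⟩ := hbnd' t ht
    have hev : φ =ᶠ[nhds t] fun y => π / 8 + myg (-y) :=
      Filter.eventuallyEq_of_mem (isOpen_Ioo.mem_nhds ht) hleft
    have hh : HasDerivAt (fun y : ℝ => π / 8 + myg (-y)) (-myg1 (-t)) t := by
      have := ((hasDerivAt_myg hb1 hb2).comp t (hasDerivAt_neg t)).const_add (π / 8)
      exact this.congr_deriv (by ring)
    exact (hh.congr_of_eventuallyEq hev).deriv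
  have hE2 : ∀ t ∈ Set.Ioo (-δ) (0:ℝ), deriv (deriv φ) t = myg2 (-t) := by
    intro t ht
    obtain ⟨hb1, hb2⟩ := hbnd' t ht
    have hev : deriv φ =ᶠ[nhds t] fun y => -myg1 (-y) :=
      Filter.eventuallyEq_of_mem (isOpen_Ioo.mem_nhds ht) hE1
    have hh : HasDerivAt (fun y : ℝ => -myg1 (-y)) (myg2 (-t)) t := by
      have := ((hasDerivAt_myg1 hb1 hb2).comp t (hasDerivAt_neg t)).neg
      exact this.congr_deriv (by ring)
    exact (hh.congr_of_eventuallyEq hev).deriv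
  have hE3 : ∀ t ∈ Set.Ioo (-δ) (0:ℝ), deriv (deriv (deriv φ)) t = -myg3 (-t) := by
    intro t ht
    obtain ⟨hb1, hb2⟩ := hbnd' t ht
    have hev : deriv (deriv φ) =ᶠ[nhds t] fun y => myg2 (-y) :=
      Filter.eventuallyEq_of_mem (isOpen_Ioo.mem_nhds ht) hE2
    have hh : HasDerivAt (fun y : ℝ => myg2 (-y)) (-myg3 (-t)) t := by
      have := (hasDerivAt_myg2 hb1 hb2).comp t (hasDerivAt_neg t)
      exact this.congr_deriv (by ring)
    exact (hh.congr_of_eventuallyEq hev).deriv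
  have hval2 : deriv (deriv (deriv φ)) 0 = 1 := by
    have hgt : Filter.Tendsto (deriv (deriv (deriv φ))) (nhdsWithin 0 (Set.Iio 0))
        (nhds (deriv (deriv (deriv φ)) 0)) := hCA.tendsto.mono_left nhdsWithin_le_nhds
    have hev3 : deriv (deriv (deriv φ)) =ᶠ[nhdsWithin 0 (Set.Iio 0)]
        fun t => -myg3 (-t) :=
      Filter.eventuallyEq_of_mem (Ioo_mem_nhdsLT_of_mem ⟨by linarith, le_rfl⟩) hE3
    exact tendsto_nhds_unique (hgt.congr' hev3) myg3_tendsto_left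
  rw [hval1] at hval2
  norm_num at hval2
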